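/- Let 𝔤 be a real semisimple Lie algebra with restricted root system Σ(𝔤,𝔞) relative to a maximal abelian subspace 𝔞 of 𝔭 (in a Cartan decomposition 𝔤 = 𝔨 ⊕ 𝔭). If α₁, α₂ ∈ Σ(𝔤,𝔞) satisfy (α₁, α₂) < 0 with respect to the invariant inner product, then for any nonzero X₁ in the root space 𝔤(𝔞;α₁) and any nonzero X₂ in 𝔤(𝔞;α₂), the bracket [X₁, X₂] is nonzero. -/

import Mathlib

/-- Oshima–Sekiguchi's lemma.  Let `𝔤` be a real semisimple Lie algebra with Cartan
involution `θ` (an involutive automorphism for which `-B(X, θY)` is positive definite,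
`B` the Killing form) and let `𝔞` be a maximal abelian subspace of `𝔭 = 𝔤^{-θ}`.
If `α₁, α₂` are restricted roots with `(α₁, α₂) < 0` (the inner product on `𝔞*`
computed via the Killing form through representatives `H₁, H₂ ∈ 𝔞`), then for any
nonzero `X₁ ∈ 𝔤(𝔞;α₁)` and nonzero `X₂ ∈ 𝔤(𝔞;α₂)` we have `[X₁, X₂] ≠ 0`. -/
theorem stmt4 {g : Type*} [LieRing g] [LieAlgebra ℝ g] [Module.Finite ℝ g]
    [LieAlgebra.IsSemisimple ℝ g]
    (θ : g ≃ₗ⁅ℝ⁆ g) (hθinv : ∀ X, θ (θ X) = X)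
    (hθpos : ∀ X : g, X ≠ 0 → 0 < -(killingForm ℝ g X (θ X)))
    (a : LieSubalgebra ℝ g)
    (haθ : ∀ X ∈ a, θ X = -X)
    (hab : ∀ X ∈ a, ∀ Y ∈ a, ⁅X, Y⁆ = 0)
    (hmax : ∀ X : g, θ X = -X → (∀ H ∈ a, ⁅H, X⁆ = (0 : g)) → X ∈ a)
    (α₁ α₂ : Module.Dual ℝ a) (hα₁ : α₁ ≠ 0) (hα₂ : α₂ ≠ 0)
    (H₁ H₂ : a)
    (hH₁ : ∀ H : a, killingForm ℝ g (H₁ : g) (H : g) = α₁ H)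
    (hH₂ : ∀ H : a, killingForm ℝ g (H₂ : g) (H : g) = α₂ H)
    (hneg : killingForm ℝ g (H₁ : g) (H₂ : g) < 0)
    (X₁ X₂ : g) (hX₁0 : X₁ ≠ 0) (hX₂0 : X₂ ≠ 0)
    (hX₁ : ∀ H : a, ⁅(H : g), X₁⁆ = α₁ H • X₁)
    (hX₂ : ∀ H : a, ⁅(H : g), X₂⁆ = α₂ H • X₂) :
    ⁅X₁, X₂⁆ ≠ 0 := by
  classical
  -- θ X₁ lies in the root space for -α₁
  have hθX₁ : ∀ H : a, ⁅(H : g), θ X₁⁆ = -(α₁ H) • θ X₁ := by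
    intro H
    have h1 : θ ⁅θ (H : g), X₁⁆ = ⁅(H : g), θ X₁⁆ := by
      rw [LieEquiv.map_lie, hθinv]
    have h2 : θ (-(α₁ H • X₁)) = -(α₁ H) • θ X₁ := by
      rw [← LieEquiv.coe_toLieHom, map_neg, map_smul, neg_smul]
    rw [← h1, haθ _ H.2, neg_lie, hX₁, h2]
  -- positive definiteness of B on a
  have hposdef : ∀ H : a, (H : g) ≠ 0 → 0 < killingForm ℝ g (H : g) (H : g) := by
    intro H hH
    have := hθpos (H : g) hH
    rw [haθ _ H.2] at this
    simpa using this
  -- Z := ⁅X₁, θ X₁⁆ lies in a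
  set Z : g := ⁅X₁, θ X₁⁆ with hZdef
  have hZa : Z ∈ a := by
    apply hmax
    · rw [hZdef, LieEquiv.map_lie, hθinv, ← lie_skew]
    · intro H hH
      have := leibniz_lie H X₁ (θ X₁)
      rw [hX₁ ⟨H, hH⟩, hθX₁ ⟨H, hH⟩, smul_lie, lie_smul, neg_smul] at this
      simpa [hZdef] using this
  set c : ℝ := killingForm ℝ g X₁ (θ X₁) with hcdef
  have hc : c < 0 := by have := hθpos X₁ hX₁0; linarith
  -- B(Z, H) = c * α₁ H for all H ∈ a
  have hZH : ∀ H : a, killingForm ℝ g Z (H : g) = c * α₁ H := by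
    intro H
    have h1 : killingForm ℝ g Z (H : g) = killingForm ℝ g X₁ ⁅θ X₁, (H : g)⁆ :=
      LieModule.traceForm_apply_lie_apply ℝ g g X₁ (θ X₁) (H : g)
    rw [h1, ← lie_skew, hθX₁ H]
    simp [mul_comm]
    exact Or.inl rfl
  -- hence Z = c • H₁ (nondegeneracy of B on a from positive definiteness)
  have hZ : Z = c • (H₁ : g) := by
    have hWa : Z - c • (H₁ : g) ∈ a := a.sub_mem hZa (a.smul_mem c H₁.2)
    have hW0 : ∀ H : a, killingForm ℝ g (Z - c • (H₁ : g)) (H : g) = 0 := by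
      intro H
      have hs : killingForm ℝ g (H₁ : g) (H : g) = α₁ H := hH₁ H
      simp only [map_sub, map_smul, LinearMap.sub_apply, LinearMap.smul_apply, hZH H, hs,
        smul_eq_mul]
      ring
    by_contra hne
    have hne' : Z - c • (H₁ : g) ≠ 0 := sub_ne_zero.mpr hne
    have := hposdef ⟨Z - c • (H₁ : g), hWa⟩ hne'
    rw [hW0 ⟨Z - c • (H₁ : g), hWa⟩] at this
    exact lt_irrefl 0 this
  -- α₁ H₁ = B(H₁, H₁) > 0
  have hH₁ne : (H₁ : g) ≠ 0 := by
    intro h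
    apply hα₁
    ext H
    rw [← hH₁ H, h]
    simp
  set d : ℝ := α₁ H₁ with hddef
  have hd : 0 < d := by
    have := hposdef H₁ hH₁ne
    rwa [hH₁ H₁] at this
  -- the sl2 triple
  set t : ℝ := 2 / (c * d) with htdef
  have hcd : c * d ≠ 0 := mul_ne_zero (ne_of_lt hc) (ne_of_gt hd)
  set e : g := X₁ with hedef
  set f : g := t • θ X₁ with hfdef
  set h : g := (t * c) • (H₁ : g) with hhdef
  have htc : t * c = 2 / d := by rw [htdef]; field_simp [hc.ne]
  have triple : IsSl2Triple h e f := by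
    refine ⟨?_, ?_, ?_, ?_⟩
    · simp only [hhdef, smul_ne_zero_iff]
      constructor
      · rw [htc]; positivity
      · exact hH₁ne
    · rw [hedef, hfdef, hhdef, lie_smul, ← hZdef, hZ, smul_smul]
    · rw [hhdef, hedef, smul_lie, hX₁ H₁, ← hddef, smul_smul, two_smul, ← two_smul ℝ]
      congr 1
      field_simp [htdef]
      rw [htdef]; field_simp [hc.ne]
    · rw [hhdef, hfdef, smul_lie, lie_smul, hθX₁ H₁, ← hddef, smul_smul, smul_smul]
      rw [show t * c * t * -d = -(2 * t) by field_simp [htdef]; rw [htdef]; field_simp]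
      module
  -- the weight of X₂
  set μ : ℝ := t * c * α₂ H₁ with hμdef
  have hμneg : μ < 0 := by
    have hsym : α₂ H₁ = killingForm ℝ g (H₁ : g) (H₂ : g) := by
      rw [← hH₂ H₁]; exact LieModule.traceForm_comm ℝ g g _ _
    rw [hμdef, htc, hsym]
    have h2d : 0 < 2 / d := by positivity
    exact mul_neg_of_pos_of_neg h2d hneg
  intro hcontra
  have prim : triple.HasPrimitiveVectorWith X₂ μ := by
    refine ⟨hX₂0, ?_, ?_⟩
    · rw [hhdef, smul_lie, hX₂ H₁, smul_smul, hμdef]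
    · exact hcontra
  obtain ⟨n, hn⟩ := prim.exists_nat
  rw [hn] at hμneg
  exact absurd hμneg (not_lt.mpr (Nat.cast_nonneg n))
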